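/- arXiv:2101.11045 — 3 statements merged into one kernel-verified Lean document; each statement's English description precedes it below -/
import Mathlib

section
/- For each fixed δ>0, the Wiener measure μ (the law of the hypoelliptic Brownian motion g) and the measure μ_δ (the law of the approximation g_δ) are mutually singular probability measures on W₀(ℍ). -/
open MeasureTheory ProbabilityTheory Filter Topology Set
open scoped Classical

noncomputable section

/-- The Heisenberg group as a set: `ℝ² × ℝ`. -/
abbrev He : Type := (ℝ × ℝ) × ℝ

/-- The standard symplectic form on `ℝ²`. -/
def symp (v w : ℝ × ℝ) : ℝ := v.1 * w.2 - v.2 * w.1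

/-- Heisenberg group multiplication. -/
def hmul (a b : He) : He := (a.1 + b.1, a.2 + b.2 + (1 / 2) * symp a.1 b.1)

/-- Heisenberg group inverse. -/
def hinv (a : He) : He := (-a.1, -a.2)

/-- The identity of the Heisenberg group. -/
def hId : He := ((0, 0), 0)

/-- The homogeneous norm `|(v,z)| = (‖v‖⁴ + z²)^(1/4)`. -/
def hnorm (g : He) : ℝ := ((g.1.1 ^ 2 + g.1.2 ^ 2) ^ 2 + g.2 ^ 2) ^ ((1 : ℝ) / 4)

/-- Euclidean norm on `ℝ²`. -/
def enorm2 (v : ℝ × ℝ) : ℝ := Real.sqrt (v.1 ^ 2 + v.2 ^ 2)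

/-- The path space `W₀(ℍ)`: continuous curves on `[0,1]` starting at the identity. -/
structure W0H where
  toFun : ℝ → He
  cont : ContinuousOn toFun (Icc 0 1)
  init : toFun 0 = hId

/-- The distance `d_{W₀(ℍ)}(x,y) = sup_{t∈[0,1]} |x(t)⁻¹ y(t)|`. -/
def dW (x y : W0H) : ℝ := ⨆ t : Icc (0 : ℝ) 1, hnorm (hmul (hinv (x.toFun t)) (y.toFun t))

/-- The norm `‖x‖_{W₀(ℍ)} = sup_{t∈[0,1]} |x(t)|`. -/
def wNorm (x : W0H) : ℝ := ⨆ t : Icc (0 : ℝ) 1, hnorm (x.toFun t)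

/-- Closure of a set in the `‖·‖_{W₀(ℍ)}`-topology. -/
def wClosure (S : Set W0H) : Set W0H := {x | ∀ ε > 0, ∃ y ∈ S, dW y x < ε}

/-- Closedness in the `‖·‖_{W₀(ℍ)}`-topology. -/
def IsWClosed (S : Set W0H) : Prop := wClosure S ⊆ S

instance : MeasurableSpace W0H := MeasurableSpace.comap W0H.toFun inferInstance

/-- The support of a measure on `W₀(ℍ)`: the smallest closed set of full measure. -/
def wSupport (μ : Measure W0H) : Set W0H := ⋂₀ {F | IsWClosed F ∧ μ F = 1}

/-- Build a path in `W₀(ℍ)` from a function (junk value if not a continuous path at `e`). -/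
def mkPath (x : ℝ → He) : W0H :=
  if h : ContinuousOn x (Icc 0 1) ∧ x 0 = hId then ⟨x, h.1, h.2⟩
  else ⟨fun _ => hId, continuousOn_const, rfl⟩

/-- `B` is a standard two-dimensional Brownian motion on `[0,1]` under `P`. -/
structure IsBM2 {Ω : Type*} [MeasurableSpace Ω] (P : Measure Ω) (B : ℝ → Ω → ℝ × ℝ) : Prop where
  init : ∀ ω, B 0 ω = 0
  cont : ∀ ω, ContinuousOn (fun t => B t ω) (Icc 0 1)
  meas : ∀ t, Measurable (B t)
  indep : ∀ (n : ℕ) (t : Fin (n + 1) → ℝ), Monotone t →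
    iIndepFun
      (fun i : Fin n => fun ω => B (t i.succ) ω - B (t i.castSucc) ω) P
  law : ∀ s t : ℝ, 0 ≤ s → s ≤ t →
    P.map (fun ω => B t ω - B s ω) =
      (gaussianReal 0 (Real.toNNReal (t - s))).prod (gaussianReal 0 (Real.toNNReal (t - s)))

/-- Riemann sums (left endpoints, uniform partition of `[0,t]`) for the Lévy area. -/
def levyRS {Ω : Type*} (B : ℝ → Ω → ℝ × ℝ) (n : ℕ) (t : ℝ) (ω : Ω) : ℝ :=
  (1 / 2) * ∑ k ∈ Finset.range n,
    symp (B ((k : ℝ) * t / n) ω) (B (((k : ℝ) + 1) * t / n) ω - B ((k : ℝ) * t / n) ω)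

/-- `A` is the Lévy stochastic area `A_t = (1/2)∫₀ᵗ ω(B_s, dB_s)` (Itô integral),
characterized as the continuous process which is the `L²`-limit of Riemann sums. -/
structure IsLevyArea {Ω : Type*} [MeasurableSpace Ω] (P : Measure Ω) (B : ℝ → Ω → ℝ × ℝ)
    (A : ℝ → Ω → ℝ) : Prop where
  init : ∀ ω, A 0 ω = 0
  cont : ∀ ω, ContinuousOn (fun t => A t ω) (Icc 0 1)
  meas : ∀ t, Measurable (A t)
  ito : ∀ t ∈ Icc (0 : ℝ) 1,
    Tendsto (fun n => ∫ ω, (levyRS B n t ω - A t ω) ^ 2 ∂P) atTop (𝓝 0)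

/-- The hypoelliptic Brownian motion `g = (B, A)` as a `W₀(ℍ)`-valued random variable. -/
def gMap {Ω : Type*} (B : ℝ → Ω → ℝ × ℝ) (A : ℝ → Ω → ℝ) (ω : Ω) : W0H :=
  mkPath fun t => (B t ω, A t ω)

/-- The set `H(ℍ)` of finite-energy horizontal curves starting at the identity:
absolutely continuous curves `γ = (𝐱,z)` with square-integrable derivative `c` of `𝐱`
and `z' = (1/2) ω(𝐱,𝐱')` a.e. -/
def HH : Set W0H :=
  {γ | ∃ c : ℝ → ℝ × ℝ, IntegrableOn c (Icc 0 1) ∧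
      IntegrableOn (fun s => (c s).1 ^ 2 + (c s).2 ^ 2) (Icc 0 1) ∧
      (∀ t ∈ Icc (0 : ℝ) 1, (γ.toFun t).1 = ∫ s in (0 : ℝ)..t, c s) ∧
      (∀ t ∈ Icc (0 : ℝ) 1, (γ.toFun t).2 =
        (1 / 2) * ∫ s in (0 : ℝ)..t, symp ((γ.toFun s).1) (c s))}

/-- Piecewise twice continuously differentiable function on `[0,1]`. -/
def PiecewiseC2 (f : ℝ → ℝ × ℝ) : Prop :=
  ContinuousOn f (Icc 0 1) ∧
  ∃ (n : ℕ) (t : Fin (n + 1) → ℝ), StrictMono t ∧ t 0 = 0 ∧ t (Fin.last n) = 1 ∧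
    ∀ i : Fin n, ContDiffOn ℝ 2 f (Icc (t i.castSucc) (t i.succ))

/-- The set `H_p(ℍ)` of piecewise `C²` horizontal curves starting at the identity. -/
def HpH : Set W0H :=
  {γ | PiecewiseC2 (fun t => (γ.toFun t).1) ∧
    ∀ t ∈ Icc (0 : ℝ) 1, (γ.toFun t).2 =
      (1 / 2) * ∫ s in (0 : ℝ)..t,
        symp ((γ.toFun s).1) (deriv (fun u => (γ.toFun u).1) s)}

/-- An interpolation profile: a `C¹` function with `f 0 = 0`, `f 1 = 1`. -/
def InterpFun (f : ℝ → ℝ) : Prop := ContDiff ℝ 1 f ∧ f 0 = 0 ∧ f 1 = 1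

/-- The piecewise interpolation `B_δ` of the Brownian motion `B`. -/
def Bdelta {Ω : Type*} (f₁ f₂ : ℝ → ℝ) (B : ℝ → Ω → ℝ × ℝ) (δ : ℝ) (t : ℝ) (ω : Ω) : ℝ × ℝ :=
  ((B ((⌊t / δ⌋ : ℝ) * δ) ω).1 +
      f₁ ((t - (⌊t / δ⌋ : ℝ) * δ) / δ) *
        ((B ((⌊t / δ⌋ : ℝ) * δ + δ) ω).1 - (B ((⌊t / δ⌋ : ℝ) * δ) ω).1),
   (B ((⌊t / δ⌋ : ℝ) * δ) ω).2 +
      f₂ ((t - (⌊t / δ⌋ : ℝ) * δ) / δ) *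
        ((B ((⌊t / δ⌋ : ℝ) * δ + δ) ω).2 - (B ((⌊t / δ⌋ : ℝ) * δ) ω).2))

/-- The approximate Lévy area `A_δ(t) = (1/2)∫₀ᵗ ω(B_δ(s), B_δ'(s)) ds`. -/
def Adelta {Ω : Type*} (f₁ f₂ : ℝ → ℝ) (B : ℝ → Ω → ℝ × ℝ) (δ : ℝ) (t : ℝ) (ω : Ω) : ℝ :=
  (1 / 2) * ∫ s in (0 : ℝ)..t,
    symp (Bdelta f₁ f₂ B δ s ω) (deriv (fun u => Bdelta f₁ f₂ B δ u ω) s)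

/-- The approximating process `g_δ = (B_δ, A_δ)` as a `W₀(ℍ)`-valued random variable. -/
def gdMap {Ω : Type*} (f₁ f₂ : ℝ → ℝ) (B : ℝ → Ω → ℝ × ℝ) (δ : ℝ) (ω : Ω) : W0H :=
  mkPath fun t => (Bdelta f₁ f₂ B δ t ω, Adelta f₁ f₂ B δ t ω)

/-- Riemann sums for the Wiener integral `∫₀¹ ⟨h(s), dB_s⟩`. -/
def wienerRS {Ω : Type*} (h : ℝ → ℝ × ℝ) (B : ℝ → Ω → ℝ × ℝ) (n : ℕ) (ω : Ω) : ℝ :=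
  ∑ k ∈ Finset.range n,
    ((h ((k : ℝ) / n)).1 * ((B (((k : ℝ) + 1) / n) ω).1 - (B ((k : ℝ) / n) ω).1) +
     (h ((k : ℝ) / n)).2 * ((B (((k : ℝ) + 1) / n) ω).2 - (B ((k : ℝ) / n) ω).2))

/-- `I` is the Wiener integral `∫₀¹ ⟨h(s), dB_s⟩` (as an `L²`-limit of Riemann sums). -/
def IsWienerInt {Ω : Type*} [MeasurableSpace Ω] (P : Measure Ω) (B : ℝ → Ω → ℝ × ℝ)
    (h : ℝ → ℝ × ℝ) (I : Ω → ℝ) : Prop :=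
  Tendsto (fun n => ∫ ω, (wienerRS h B n ω - I ω) ^ 2 ∂P) atTop (𝓝 0)


namespace SingAux

/-! Auxiliary machinery for the proof of `mu_and_mu_delta_singular`. -/

def interp (f β : ℝ → ℝ) (δ t : ℝ) : ℝ :=
  β ((⌊t / δ⌋ : ℝ) * δ) +
    f ((t - (⌊t / δ⌋ : ℝ) * δ) / δ) * (β ((⌊t / δ⌋ : ℝ) * δ + δ) - β ((⌊t / δ⌋ : ℝ) * δ))

def dinterp (f β : ℝ → ℝ) (δ t : ℝ) : ℝ :=
  deriv f ((t - (⌊t / δ⌋ : ℝ) * δ) / δ) *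
    (β ((⌊t / δ⌋ : ℝ) * δ + δ) - β ((⌊t / δ⌋ : ℝ) * δ)) / δ

def piece (f β : ℝ → ℝ) (δ : ℝ) (k : ℤ) (t : ℝ) : ℝ :=
  β (k * δ) + f ((t - k * δ) / δ) * (β (k * δ + δ) - β (k * δ))

def dpiece (f β : ℝ → ℝ) (δ : ℝ) (k : ℤ) (t : ℝ) : ℝ :=
  deriv f ((t - k * δ) / δ) * (β (k * δ + δ) - β (k * δ)) / δ

variable {f β : ℝ → ℝ} {δ : ℝ}

lemma floor_div_eq (hδ : 0 < δ) {k : ℤ} {s : ℝ}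
    (hs : s ∈ Ico ((k : ℝ) * δ) ((k : ℝ) * δ + δ)) : ⌊s / δ⌋ = k := by
  rw [Int.floor_eq_iff]
  constructor
  · rw [le_div_iff₀ hδ]; exact hs.1
  · rw [div_lt_iff₀ hδ]; push_cast; linarith [hs.2]

lemma mem_Ico_floor (hδ : 0 < δ) (s : ℝ) :
    s ∈ Ico ((⌊s / δ⌋ : ℝ) * δ) ((⌊s / δ⌋ : ℝ) * δ + δ) := by
  have h1 : (⌊s / δ⌋ : ℝ) ≤ s / δ := Int.floor_le _
  have h2 : s / δ < ⌊s / δ⌋ + 1 := Int.lt_floor_add_one _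
  have hs : s / δ * δ = s := div_mul_cancel₀ _ hδ.ne'
  constructor
  · nlinarith
  · nlinarith

lemma interp_eq_piece (hδ : 0 < δ) {k : ℤ} {s : ℝ}
    (hs : s ∈ Ico ((k : ℝ) * δ) ((k : ℝ) * δ + δ)) :
    interp f β δ s = piece f β δ k s := by
  simp only [interp, piece, floor_div_eq hδ hs]

lemma dinterp_eq_dpiece (hδ : 0 < δ) {k : ℤ} {s : ℝ}
    (hs : s ∈ Ico ((k : ℝ) * δ) ((k : ℝ) * δ + δ)) :
    dinterp f β δ s = dpiece f β δ k s := by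
  simp only [dinterp, dpiece, floor_div_eq hδ hs]

lemma continuous_piece (hf : Continuous f) (k : ℤ) : Continuous (piece f β δ k) :=
  continuous_const.add ((hf.comp ((continuous_id.sub continuous_const).div_const δ)).mul
    continuous_const)

lemma continuous_dpiece (hf : Continuous (deriv f)) (k : ℤ) : Continuous (dpiece f β δ k) :=
  ((hf.comp ((continuous_id.sub continuous_const).div_const δ)).mul
    continuous_const).div_const δ

lemma continuous_interp (hδ : 0 < δ) (hf : Continuous f) (hf0 : f 0 = 0) (hf1 : f 1 = 1)
    (β : ℝ → ℝ) : Continuous (interp f β δ) := by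
  rw [continuous_iff_continuousAt]
  intro t₀
  have hmem := mem_Ico_floor hδ t₀
  set k := ⌊t₀ / δ⌋ with hk
  by_cases hgrid : t₀ = (k : ℝ) * δ
  · rw [continuousAt_iff_continuous_left_right]
    constructor
    · rw [← continuousWithinAt_Iio_iff_Iic]
      have hIco : Ico ((k : ℝ) * δ - δ) t₀ ∈ 𝓝[<] t₀ :=
        Ico_mem_nhdsLT (by rw [hgrid]; linarith)
      have hc : ContinuousWithinAt (piece f β δ (k - 1)) (Ico ((k : ℝ) * δ - δ) t₀) t₀ :=
        (continuous_piece hf (k - 1)).continuousAt.continuousWithinAt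
      have heq : ∀ y ∈ Ico ((k : ℝ) * δ - δ) t₀, interp f β δ y = piece f β δ (k - 1) y := by
        intro y hy
        apply interp_eq_piece hδ
        rw [hgrid] at hy
        constructor
        · push_cast; linarith [hy.1]
        · push_cast; linarith [hy.2]
      have hval : interp f β δ t₀ = piece f β δ (k - 1) t₀ := by
        rw [interp_eq_piece hδ hmem]
        simp only [piece]
        push_cast
        rw [hgrid, show ((k : ℝ) * δ - (k : ℝ) * δ) / δ = 0 by simp,
          show ((k : ℝ) * δ - ((k : ℝ) - 1) * δ) / δ = 1 by
            rw [div_eq_one_iff_eq hδ.ne']; ring,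
          show ((k : ℝ) - 1) * δ + δ = (k : ℝ) * δ by ring, hf0, hf1]
        ring
      exact (hc.congr heq hval).mono_of_mem_nhdsWithin hIco
    · have hIco : Ico ((k : ℝ) * δ) ((k : ℝ) * δ + δ) ∈ 𝓝[≥] t₀ :=
        Ico_mem_nhdsGE_of_mem hmem
      have hc : ContinuousWithinAt (piece f β δ k) (Ico ((k : ℝ) * δ) ((k : ℝ) * δ + δ)) t₀ :=
        (continuous_piece hf k).continuousAt.continuousWithinAt
      have heq : ∀ y ∈ Ico ((k : ℝ) * δ) ((k : ℝ) * δ + δ),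
          interp f β δ y = piece f β δ k y := fun y hy => interp_eq_piece hδ hy
      exact (hc.congr heq (interp_eq_piece hδ hmem)).mono_of_mem_nhdsWithin hIco
  · have hlt : (k : ℝ) * δ < t₀ := hmem.1.lt_of_ne fun h => hgrid h.symm
    have hev : piece f β δ k =ᶠ[𝓝 t₀] interp f β δ := by
      filter_upwards [Ioo_mem_nhds hlt hmem.2] with y hy
      exact (interp_eq_piece hδ ⟨hy.1.le, hy.2⟩).symm
    exact ((continuous_piece hf k).continuousAt).congr hev

lemma hasDerivAt_interp (hδ : 0 < δ) (hf : ContDiff ℝ 1 f) (β : ℝ → ℝ) {s : ℝ}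
    (hs : ∀ k : ℤ, s ≠ (k : ℝ) * δ) :
    HasDerivAt (interp f β δ) (dinterp f β δ s) s := by
  have hmem := mem_Ico_floor hδ s
  set k := ⌊s / δ⌋ with hk
  have hlt : (k : ℝ) * δ < s := hmem.1.lt_of_ne fun h => hs k h.symm
  have hpd : HasDerivAt (piece f β δ k) (dpiece f β δ k s) s := by
    have h1 : HasDerivAt (fun t : ℝ => (t - (k : ℝ) * δ) / δ) (1 / δ) s := by
      simpa using ((hasDerivAt_id s).sub_const ((k : ℝ) * δ)).div_const δ
    have h2 : HasDerivAt f (deriv f ((s - (k : ℝ) * δ) / δ)) ((s - (k : ℝ) * δ) / δ) :=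
      ((hf.differentiable one_ne_zero) _).hasDerivAt
    have h3 := ((h2.comp s h1).mul_const (β ((k : ℝ) * δ + δ) - β ((k : ℝ) * δ))).const_add
      (β ((k : ℝ) * δ))
    refine h3.congr_deriv ?_
    simp only [dpiece]
    ring
  have hev : piece f β δ k =ᶠ[𝓝 s] interp f β δ := by
    filter_upwards [Ioo_mem_nhds hlt hmem.2] with y hy
    exact (interp_eq_piece hδ ⟨hy.1.le, hy.2⟩).symm
  have := hpd.congr_of_eventuallyEq hev.symm
  rwa [show dpiece f β δ k s = dinterp f β δ s from (dinterp_eq_dpiece hδ hmem).symm] at this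

section Meas

variable {Ω : Type*} [MeasurableSpace Ω]

lemma measurable_interp_prod (hf : Continuous f) {b : ℝ → Ω → ℝ}
    (hb : ∀ t, Measurable (b t)) :
    Measurable fun p : Ω × ℝ => interp f (fun r => b r p.1) δ p.2 := by
  have hfloor : Measurable fun p : Ω × ℝ => (⌊p.2 / δ⌋ : ℤ) :=
    Int.measurable_floor.comp (measurable_snd.div_const δ)
  have hcast : Measurable fun p : Ω × ℝ => ((⌊p.2 / δ⌋ : ℤ) : ℝ) :=
    (measurable_of_countable (fun k : ℤ => (k : ℝ))).comp hfloor
  have hBk : Measurable fun p : Ω × ℤ => b ((p.2 : ℝ) * δ) p.1 :=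
    measurable_from_prod_countable_left fun k => hb ((k : ℝ) * δ)
  have hBk' : Measurable fun p : Ω × ℤ => b ((p.2 : ℝ) * δ + δ) p.1 :=
    measurable_from_prod_countable_left fun k => hb ((k : ℝ) * δ + δ)
  have h1 : Measurable fun p : Ω × ℝ => b ((⌊p.2 / δ⌋ : ℝ) * δ) p.1 :=
    hBk.comp (measurable_fst.prodMk hfloor)
  have h2 : Measurable fun p : Ω × ℝ => b ((⌊p.2 / δ⌋ : ℝ) * δ + δ) p.1 :=
    hBk'.comp (measurable_fst.prodMk hfloor)
  have h3 : Measurable fun p : Ω × ℝ => f ((p.2 - (⌊p.2 / δ⌋ : ℝ) * δ) / δ) :=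
    hf.measurable.comp ((measurable_snd.sub (hcast.mul_const δ)).div_const δ)
  exact h1.add (h3.mul (h2.sub h1))

lemma measurable_dinterp_prod (hf : Continuous (deriv f)) {b : ℝ → Ω → ℝ}
    (hb : ∀ t, Measurable (b t)) :
    Measurable fun p : Ω × ℝ => dinterp f (fun r => b r p.1) δ p.2 := by
  have hfloor : Measurable fun p : Ω × ℝ => (⌊p.2 / δ⌋ : ℤ) :=
    Int.measurable_floor.comp (measurable_snd.div_const δ)
  have hcast : Measurable fun p : Ω × ℝ => ((⌊p.2 / δ⌋ : ℤ) : ℝ) :=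
    (measurable_of_countable (fun k : ℤ => (k : ℝ))).comp hfloor
  have hBk : Measurable fun p : Ω × ℤ => b ((p.2 : ℝ) * δ) p.1 :=
    measurable_from_prod_countable_left fun k => hb ((k : ℝ) * δ)
  have hBk' : Measurable fun p : Ω × ℤ => b ((p.2 : ℝ) * δ + δ) p.1 :=
    measurable_from_prod_countable_left fun k => hb ((k : ℝ) * δ + δ)
  have h1 : Measurable fun p : Ω × ℝ => b ((⌊p.2 / δ⌋ : ℝ) * δ) p.1 :=
    hBk.comp (measurable_fst.prodMk hfloor)
  have h2 : Measurable fun p : Ω × ℝ => b ((⌊p.2 / δ⌋ : ℝ) * δ + δ) p.1 :=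
    hBk'.comp (measurable_fst.prodMk hfloor)
  have h3 : Measurable fun p : Ω × ℝ => deriv f ((p.2 - (⌊p.2 / δ⌋ : ℝ) * δ) / δ) :=
    hf.measurable.comp ((measurable_snd.sub (hcast.mul_const δ)).div_const δ)
  exact (h3.mul (h2.sub h1)).div_const δ

end Meas

section OmegaAux

variable {Ω : Type*} [MeasurableSpace Ω] {f₁ f₂ : ℝ → ℝ} {B : ℝ → Ω → ℝ × ℝ}

lemma bdelta_eq (ω : Ω) :
    (fun t => Bdelta f₁ f₂ B δ t ω) =
      fun t => ((interp f₁ (fun r => (B r ω).1) δ t,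
        interp f₂ (fun r => (B r ω).2) δ t) : ℝ × ℝ) := rfl

def GJ (f₁ f₂ : ℝ → ℝ) (B : ℝ → Ω → ℝ × ℝ) (δ : ℝ) (s : ℝ) (ω : Ω) : ℝ :=
  interp f₁ (fun r => (B r ω).1) δ s * dinterp f₂ (fun r => (B r ω).2) δ s -
    interp f₂ (fun r => (B r ω).2) δ s * dinterp f₁ (fun r => (B r ω).1) δ s

lemma ae_not_grid (δ : ℝ) : ∀ᵐ s ∂(volume : Measure ℝ), ∀ k : ℤ, s ≠ (k : ℝ) * δ := by
  rw [ae_iff]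
  refine measure_mono_null (fun s hs => ?_) ((countable_range fun k : ℤ => (k : ℝ) * δ).measure_zero _)
  simp only [mem_setOf_eq, not_forall] at hs
  obtain ⟨k, hk⟩ := hs
  rw [not_not] at hk
  exact ⟨k, hk.symm⟩

lemma adelta_eq (hδ : 0 < δ) (hf₁ : ContDiff ℝ 1 f₁) (hf₂ : ContDiff ℝ 1 f₂) (t : ℝ) (ω : Ω) :
    Adelta f₁ f₂ B δ t ω = (1 / 2) * ∫ s in (0 : ℝ)..t, GJ f₁ f₂ B δ s ω := by
  rw [Adelta]
  congr 1
  apply intervalIntegral.integral_congr_ae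
  filter_upwards [ae_not_grid δ] with s hs _
  have h1 := hasDerivAt_interp hδ hf₁ (fun r => (B r ω).1) hs
  have h2 := hasDerivAt_interp hδ hf₂ (fun r => (B r ω).2) hs
  have hD : HasDerivAt (fun u => Bdelta f₁ f₂ B δ u ω)
      ((dinterp f₁ (fun r => (B r ω).1) δ s, dinterp f₂ (fun r => (B r ω).2) δ s) : ℝ × ℝ) s :=
    h1.prodMk h2
  rw [hD.deriv]
  rfl

lemma integrableOn_GJ (hδ : 0 < δ) (hf₁ : ContDiff ℝ 1 f₁) (hf₂ : ContDiff ℝ 1 f₂) (ω : Ω) :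
    IntegrableOn (fun s => GJ f₁ f₂ B δ s ω) (Icc (0 : ℝ) 1) volume := by
  have hcover : Icc (0 : ℝ) 1 ⊆
      ⋃ k ∈ Finset.range ((⌊1 / δ⌋).toNat + 1), Ico ((k : ℝ) * δ) ((k : ℝ) * δ + δ) := by
    intro s hs
    have h0 : (0 : ℤ) ≤ ⌊s / δ⌋ := Int.floor_nonneg.mpr (div_nonneg hs.1 hδ.le)
    have hle : ⌊s / δ⌋ ≤ ⌊1 / δ⌋ := Int.floor_le_floor (by gcongr; exact hs.2)
    refine mem_iUnion₂.mpr ⟨(⌊s / δ⌋).toNat, Finset.mem_range.mpr ?_, ?_⟩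
    · have := Int.toNat_le_toNat hle; omega
    · have hmem := mem_Ico_floor hδ s
      have hc : (((⌊s / δ⌋).toNat : ℕ) : ℝ) = ((⌊s / δ⌋ : ℤ) : ℝ) := by
        exact_mod_cast congrArg Int.cast (Int.toNat_of_nonneg h0)
      rw [hc]
      exact hmem
  apply IntegrableOn.mono_set _ hcover
  apply integrableOn_finset_iUnion.mpr
  intro k _
  have hIcc : IntegrableOn (fun s =>
      piece f₁ (fun r => (B r ω).1) δ (k : ℤ) s * dpiece f₂ (fun r => (B r ω).2) δ (k : ℤ) s -
        piece f₂ (fun r => (B r ω).2) δ (k : ℤ) s * dpiece f₁ (fun r => (B r ω).1) δ (k : ℤ) s)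
      (Ico ((k : ℝ) * δ) ((k : ℝ) * δ + δ)) volume := by
    apply IntegrableOn.mono_set _ Ico_subset_Icc_self
    apply Continuous.integrableOn_Icc
    exact ((continuous_piece hf₁.continuous _).mul
        (continuous_dpiece (hf₂.continuous_deriv le_rfl) _)).sub
      ((continuous_piece hf₂.continuous _).mul
        (continuous_dpiece (hf₁.continuous_deriv le_rfl) _))
  apply hIcc.congr_fun _ measurableSet_Ico
  intro s hs
  have hs' : s ∈ Ico ((((k : ℕ) : ℤ) : ℝ) * δ) ((((k : ℕ) : ℤ) : ℝ) * δ + δ) := by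
    push_cast
    exact_mod_cast hs
  simp only [GJ, interp_eq_piece hδ hs', dinterp_eq_dpiece hδ hs']


lemma meas_GJ (hf₁ : ContDiff ℝ 1 f₁) (hf₂ : ContDiff ℝ 1 f₂)
    (hBm : ∀ t, Measurable (B t)) :
    Measurable fun p : Ω × ℝ => GJ f₁ f₂ B δ p.2 p.1 := by
  have i1 := measurable_interp_prod (δ := δ) hf₁.continuous
    (b := fun r ω => (B r ω).1) (fun t => (hBm t).fst)
  have i2 := measurable_interp_prod (δ := δ) hf₂.continuous
    (b := fun r ω => (B r ω).2) (fun t => (hBm t).snd)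
  have d1 := measurable_dinterp_prod (δ := δ) (hf₁.continuous_deriv le_rfl)
    (b := fun r ω => (B r ω).1) (fun t => (hBm t).fst)
  have d2 := measurable_dinterp_prod (δ := δ) (hf₂.continuous_deriv le_rfl)
    (b := fun r ω => (B r ω).2) (fun t => (hBm t).snd)
  exact (i1.mul d2).sub (i2.mul d1)

lemma meas_adelta (hδ : 0 < δ) (hf₁ : ContDiff ℝ 1 f₁) (hf₂ : ContDiff ℝ 1 f₂)
    (hBm : ∀ t, Measurable (B t)) (t : ℝ) :
    Measurable fun ω => Adelta f₁ f₂ B δ t ω := by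
  have heq : (fun ω => Adelta f₁ f₂ B δ t ω) = fun ω =>
      (1 / 2 : ℝ) * ((∫ s in Ioc (0 : ℝ) t, GJ f₁ f₂ B δ s ω) -
        ∫ s in Ioc t (0 : ℝ), GJ f₁ f₂ B δ s ω) := by
    funext ω
    rw [adelta_eq hδ hf₁ hf₂]
    rfl
  rw [heq]
  have hGJ := (meas_GJ (δ := δ) hf₁ hf₂ hBm).stronglyMeasurable
  exact (((hGJ.integral_prod_right' (ν := volume.restrict (Ioc (0 : ℝ) t))).measurable).sub
    ((hGJ.integral_prod_right' (ν := volume.restrict (Ioc t (0 : ℝ)))).measurable)).const_mul _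

lemma meas_bdelta (hBm : ∀ t, Measurable (B t)) (t : ℝ) :
    Measurable fun ω => Bdelta f₁ f₂ B δ t ω := by
  unfold Bdelta
  apply Measurable.prodMk
  · exact (hBm _).fst.add
      ((((hBm _).fst.sub (hBm _).fst)).const_mul _)
  · exact (hBm _).snd.add
      ((((hBm _).snd.sub (hBm _).snd)).const_mul _)

lemma cont_bdelta (hδ : 0 < δ) (hf₁ : InterpFun f₁) (hf₂ : InterpFun f₂) (ω : Ω) :
    Continuous fun t => Bdelta f₁ f₂ B δ t ω := by
  rw [bdelta_eq]
  exact (continuous_interp hδ hf₁.1.continuous hf₁.2.1 hf₁.2.2 _).prodMk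
    (continuous_interp hδ hf₂.1.continuous hf₂.2.1 hf₂.2.2 _)

lemma contOn_adelta (hδ : 0 < δ) (hf₁ : InterpFun f₁) (hf₂ : InterpFun f₂) (ω : Ω) :
    ContinuousOn (fun t => Adelta f₁ f₂ B δ t ω) (Icc (0 : ℝ) 1) := by
  have heq : (fun t => Adelta f₁ f₂ B δ t ω) =
      fun t => (1 / 2 : ℝ) * ∫ s in (0 : ℝ)..t, GJ f₁ f₂ B δ s ω :=
    funext fun t => adelta_eq hδ hf₁.1 hf₂.1 t ω
  rw [heq]
  have hint : IntegrableOn (fun s => GJ f₁ f₂ B δ s ω) (uIcc (0 : ℝ) 1) volume := by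
    rw [uIcc_of_le zero_le_one]; exact integrableOn_GJ hδ hf₁.1 hf₂.1 ω
  have hP := intervalIntegral.continuousOn_primitive_interval hint
  rw [uIcc_of_le zero_le_one] at hP
  exact continuousOn_const.mul hP

lemma bdelta_zero (hδ : 0 < δ) (hf₁ : InterpFun f₁) (hf₂ : InterpFun f₂) {ω : Ω}
    (hB0 : B 0 ω = 0) : Bdelta f₁ f₂ B δ 0 ω = 0 := by
  have h : (0 : ℝ) / δ = 0 := zero_div δ
  simp [Bdelta, h, hB0, hf₁.2.1, hf₂.2.1, Prod.ext_iff]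

lemma adelta_zero (ω : Ω) : Adelta f₁ f₂ B δ 0 ω = 0 := by
  rw [Adelta, intervalIntegral.integral_same, mul_zero]

lemma bdelta_val (hδ : 0 < δ) {w : ℝ} (h0 : 0 ≤ w) (h1 : w < δ) {ω : Ω} (hB0 : B 0 ω = 0) :
    Bdelta f₁ f₂ B δ w ω = (f₁ (w / δ) * (B δ ω).1, f₂ (w / δ) * (B δ ω).2) := by
  have hfl : ⌊w / δ⌋ = 0 :=
    Int.floor_eq_zero_iff.mpr ⟨div_nonneg h0 hδ.le, (div_lt_one hδ).mpr h1⟩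
  simp [Bdelta, hfl, hB0]

lemma cond_gd (hδ : 0 < δ) (hf₁ : InterpFun f₁) (hf₂ : InterpFun f₂) {ω : Ω}
    (hB0 : B 0 ω = 0) :
    ContinuousOn (fun t => ((Bdelta f₁ f₂ B δ t ω, Adelta f₁ f₂ B δ t ω) : He)) (Icc 0 1) ∧
      ((Bdelta f₁ f₂ B δ 0 ω, Adelta f₁ f₂ B δ 0 ω) : He) = hId := by
  constructor
  · exact ((cont_bdelta hδ hf₁ hf₂ ω).continuousOn).prodMk (contOn_adelta hδ hf₁ hf₂ ω)
  · rw [bdelta_zero hδ hf₁ hf₂ hB0, adelta_zero]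
    rfl

end OmegaAux


lemma measurable_toW0H {α : Type*} [MeasurableSpace α] {g : α → W0H}
    (h : Measurable fun a => (g a).toFun) : Measurable g := fun s hs => by
  obtain ⟨u, hu, rfl⟩ := hs
  exact h hu

lemma measurable_W0H_toFun : Measurable (W0H.toFun) := fun s hs => ⟨s, hs, rfl⟩

lemma gaussian_singleton {w : NNReal} (hw : w ≠ 0) (m c : ℝ) :
    gaussianReal m w {c} = 0 :=
  gaussianReal_absolutelyContinuous m hw (measure_singleton c)

lemma null_linear {Ω : Type*} [MeasurableSpace Ω] (P : Measure Ω) [IsProbabilityMeasure P]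
    {B : ℝ → Ω → ℝ × ℝ} (hB : IsBM2 P B) {u v c₁ c₂ : ℝ} (hu : 0 < u) (huv : u < v)
    (hc : c₂ ≠ 0 ∨ (c₂ = 0 ∧ c₁ ≠ 0)) :
    P {ω | c₁ * (B u ω).1 + c₂ * (B v ω).1 = 0} = 0 := by
  set ξ : Ω → ℝ := fun ω => (B u ω).1 with hξ
  set η : Ω → ℝ := fun ω => (B v ω).1 - (B u ω).1 with hη
  have hmξ : Measurable ξ := (hB.meas u).fst
  have hmη : Measurable η := (hB.meas v).fst.sub (hB.meas u).fst
  have hBu : (fun ω => B u ω - B 0 ω) = fun ω => B u ω := by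
    funext ω; rw [hB.init, sub_zero]
  -- laws of the coordinates
  have lawξ : P.map ξ = gaussianReal 0 (Real.toNNReal u) := by
    have h := hB.law 0 u le_rfl hu.le
    rw [hBu, sub_zero] at h
    have hcomp : ξ = Prod.fst ∘ (fun ω => B u ω) := rfl
    rw [hcomp, ← Measure.map_map measurable_fst (hB.meas u), h, Measure.map_fst_prod,
      measure_univ, one_smul]
  have lawη : P.map η = gaussianReal 0 (Real.toNNReal (v - u)) := by
    have h := hB.law u v hu.le huv.le
    have hcomp : η = Prod.fst ∘ (fun ω => B v ω - B u ω) := rfl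
    rw [hcomp, ← Measure.map_map (f := fun ω => B v ω - B u ω) measurable_fst ((hB.meas v).sub (hB.meas u)), h,
      Measure.map_fst_prod, measure_univ, one_smul]
  -- independence
  have hmono : Monotone ![0, u, v] := by
    intro i j hij
    fin_cases i <;> fin_cases j <;>
      simp_all [Matrix.cons_val_zero, Matrix.cons_val_one, Matrix.head_cons] <;>
      first
        | linarith
        | (exfalso; omega)
  have hind := hB.indep 2 ![0, u, v] hmono
  have hIF := hind.indepFun (i := 0) (j := 1) (by decide)
  have e0 : (fun ω => B (![0, u, v] (0 : Fin 2).succ) ω - B (![0, u, v] (0 : Fin 2).castSucc) ω)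
      = fun ω => B u ω - B 0 ω := rfl
  have e1 : (fun ω => B (![0, u, v] (1 : Fin 2).succ) ω - B (![0, u, v] (1 : Fin 2).castSucc) ω)
      = fun ω => B v ω - B u ω := rfl
  rw [e0, e1, hBu] at hIF
  have hXY : IndepFun ξ η P := hIF.comp measurable_fst measurable_fst
  -- law of the pair
  have hmap : P.map (fun ω => (ξ ω, η ω)) = (P.map ξ).prod (P.map η) :=
    (indepFun_iff_map_prod_eq_prod_map_map hmξ.aemeasurable hmη.aemeasurable).mp hXY
  have hT : MeasurableSet {p : ℝ × ℝ | (c₁ + c₂) * p.1 + c₂ * p.2 = 0} :=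
    measurableSet_eq_fun ((measurable_fst.const_mul _).add (measurable_snd.const_mul _))
      measurable_const
  have hset : {ω | c₁ * (B u ω).1 + c₂ * (B v ω).1 = 0}
      = (fun ω => (ξ ω, η ω)) ⁻¹' {p : ℝ × ℝ | (c₁ + c₂) * p.1 + c₂ * p.2 = 0} := by
    ext ω
    have hkey : (c₁ + c₂) * ξ ω + c₂ * η ω = c₁ * (B u ω).1 + c₂ * (B v ω).1 := by
      simp only [hξ, hη]; ring
    simp only [mem_setOf_eq, mem_preimage]
    constructor <;> intro h <;> linarith [hkey]
  have hvu : Real.toNNReal (v - u) ≠ 0 := by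
    rw [Ne, Real.toNNReal_eq_zero, not_le]; linarith
  have hu0 : Real.toNNReal u ≠ 0 := by
    rw [Ne, Real.toNNReal_eq_zero, not_le]; linarith
  rw [hset, ← Measure.map_apply (hmξ.prodMk hmη) hT, hmap, lawξ, lawη,
    Measure.prod_apply hT]
  have hae : ∀ᵐ x ∂(gaussianReal 0 (Real.toNNReal u)),
      gaussianReal 0 (Real.toNNReal (v - u))
        (Prod.mk x ⁻¹' {p : ℝ × ℝ | (c₁ + c₂) * p.1 + c₂ * p.2 = 0}) = 0 := by
    rcases hc with hc2 | ⟨hc2, hc1⟩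
    · refine Filter.Eventually.of_forall fun x => ?_
      have hpre : (Prod.mk x ⁻¹' {p : ℝ × ℝ | (c₁ + c₂) * p.1 + c₂ * p.2 = 0})
          = {(-((c₁ + c₂) * x)) / c₂} := by
        ext y
        simp only [mem_preimage, mem_setOf_eq, mem_singleton_iff]
        rw [eq_div_iff hc2]
        constructor <;> intro h <;> linarith
      rw [hpre]
      exact gaussian_singleton hvu _ _
    · have h0 : ∀ᵐ x ∂(gaussianReal 0 (Real.toNNReal u)), x ≠ 0 := by
        rw [ae_iff]
        have : {x : ℝ | ¬x ≠ 0} = {0} := by ext x; simp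
        rw [this]
        exact gaussian_singleton hu0 _ _
      filter_upwards [h0] with x hx
      have hpre : (Prod.mk x ⁻¹' {p : ℝ × ℝ | (c₁ + c₂) * p.1 + c₂ * p.2 = 0}) = ∅ := by
        ext y
        simp only [mem_preimage, mem_setOf_eq, mem_empty_iff_false, iff_false, hc2, add_zero,
          zero_mul]
        exact fun h => (mul_ne_zero hc1 hx) h
      rw [hpre]
      simp
  calc ∫⁻ x, gaussianReal 0 (Real.toNNReal (v - u))
        (Prod.mk x ⁻¹' {p : ℝ × ℝ | (c₁ + c₂) * p.1 + c₂ * p.2 = 0})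
        ∂(gaussianReal 0 (Real.toNNReal u))
      = ∫⁻ _, 0 ∂(gaussianReal 0 (Real.toNNReal u)) := lintegral_congr_ae hae
    _ = 0 := lintegral_zero

end SingAux


/-- (Proposition `p.singular`): for each fixed `δ > 0`, the Wiener measure `μ` (the law
of the hypoelliptic Brownian motion `g`) and the law `μ_δ` of the approximation `g_δ`
are mutually singular probability measures on `W₀(ℍ)`. -/
theorem mu_and_mu_delta_singular {Ω : Type*} [MeasurableSpace Ω] (P : Measure Ω)
    [IsProbabilityMeasure P] (B : ℝ → Ω → ℝ × ℝ) (A : ℝ → Ω → ℝ)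
    (hB : IsBM2 P B) (hA : IsLevyArea P B A)
    (f₁ f₂ : ℝ → ℝ) (hf₁ : InterpFun f₁) (hf₂ : InterpFun f₂)
    (δ : ℝ) (hδ : 0 < δ) :
    IsProbabilityMeasure (P.map (gMap B A)) ∧
    IsProbabilityMeasure (P.map (gdMap f₁ f₂ B δ)) ∧
    (P.map (gMap B A)).MutuallySingular (P.map (gdMap f₁ f₂ B δ)) := by
  classical
  obtain ⟨hf₁c, hf₁0, hf₁1⟩ := id hf₁
  obtain ⟨hf₂c, hf₂0, hf₂1⟩ := id hf₂
  have hgFun : ∀ ω, (gMap B A ω).toFun = fun t => ((B t ω, A t ω) : He) := by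
    intro ω
    have hc : ContinuousOn (fun t => ((B t ω, A t ω) : He)) (Icc 0 1) ∧
        ((B 0 ω, A 0 ω) : He) = hId := by
      refine ⟨(hB.cont ω).prodMk (hA.cont ω), ?_⟩
      rw [hB.init, hA.init]; rfl
    rw [gMap, mkPath, dif_pos hc]
  have hgdFun : ∀ ω, (gdMap f₁ f₂ B δ ω).toFun =
      fun t => ((Bdelta f₁ f₂ B δ t ω, Adelta f₁ f₂ B δ t ω) : He) := by
    intro ω
    rw [gdMap, mkPath, dif_pos (SingAux.cond_gd hδ hf₁ hf₂ (hB.init ω))]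
  have hmg : Measurable (gMap B A) := by
    apply SingAux.measurable_toW0H
    have h : (fun ω => (gMap B A ω).toFun) = fun ω => fun t => ((B t ω, A t ω) : He) :=
      funext hgFun
    rw [h]
    exact measurable_pi_lambda _ fun t => (hB.meas t).prodMk (hA.meas t)
  have hmgd : Measurable (gdMap f₁ f₂ B δ) := by
    apply SingAux.measurable_toW0H
    have h : (fun ω => (gdMap f₁ f₂ B δ ω).toFun) =
        fun ω => fun t => ((Bdelta f₁ f₂ B δ t ω, Adelta f₁ f₂ B δ t ω) : He) := funext hgdFun
    rw [h]
    exact measurable_pi_lambda _ fun t =>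
      (SingAux.meas_bdelta hB.meas t).prodMk (SingAux.meas_adelta hδ hf₁c hf₂c hB.meas t)
  refine ⟨Measure.isProbabilityMeasure_map hmg.aemeasurable,
    Measure.isProbabilityMeasure_map hmgd.aemeasurable, ?_⟩
  set u : ℝ := δ / 2 with hu_def
  set v : ℝ := 3 * δ / 4 with hv_def
  have hu : 0 < u := by rw [hu_def]; positivity
  have huv : u < v := by rw [hu_def, hv_def]; linarith
  have hvδ : v < δ := by rw [hv_def]; linarith
  have huδ : u < δ := lt_trans huv hvδ
  set a : ℝ := f₁ (u / δ) with ha_def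
  set b : ℝ := f₁ (v / δ) with hb_def
  set c₁ : ℝ := if a = 0 then 1 else b with hc₁_def
  set c₂ : ℝ := if a = 0 then 0 else -a with hc₂_def
  have hc : c₂ ≠ 0 ∨ (c₂ = 0 ∧ c₁ ≠ 0) := by
    by_cases h : a = 0
    · right
      rw [hc₂_def, hc₁_def, if_pos h, if_pos h]
      exact ⟨rfl, one_ne_zero⟩
    · left
      rw [hc₂_def, if_neg h]
      exact neg_ne_zero.mpr h
  have hzero : c₁ * a + c₂ * b = 0 := by
    by_cases h : a = 0
    · rw [hc₁_def, hc₂_def, if_pos h, if_pos h, h]; ring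
    · rw [hc₁_def, hc₂_def, if_neg h, if_neg h]; ring
  set S : Set W0H := {γ | c₁ * (γ.toFun u).1.1 + c₂ * (γ.toFun v).1.1 = 0} with hS_def
  have hev : ∀ t : ℝ, Measurable fun γ : W0H => (γ.toFun t).1.1 := fun t =>
    (((measurable_pi_apply t).comp SingAux.measurable_W0H_toFun).fst).fst
  have hSmeas : MeasurableSet S :=
    measurableSet_eq_fun (((hev u).const_mul c₁).add ((hev v).const_mul c₂)) measurable_const
  refine ⟨S, hSmeas, ?_, ?_⟩
  · rw [Measure.map_apply hmg hSmeas]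
    have hpre : gMap B A ⁻¹' S = {ω | c₁ * (B u ω).1 + c₂ * (B v ω).1 = 0} := by
      ext ω
      simp only [mem_preimage, hS_def, mem_setOf_eq, hgFun ω]
    rw [hpre]
    exact SingAux.null_linear P hB hu huv hc
  · rw [Measure.map_apply hmgd hSmeas.compl]
    have hpre : gdMap f₁ f₂ B δ ⁻¹' Sᶜ = ∅ := by
      ext ω
      simp only [mem_preimage, mem_compl_iff, mem_empty_iff_false, iff_false, not_not,
        hS_def, mem_setOf_eq, hgdFun ω]
      rw [SingAux.bdelta_val (f₁ := f₁) (f₂ := f₂) hδ hu.le huδ (hB.init ω),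
        SingAux.bdelta_val (f₁ := f₁) (f₂ := f₂) hδ (le_of_lt (lt_trans hu huv)) hvδ
          (hB.init ω)]
      show c₁ * (a * (B δ ω).1) + c₂ * (b * (B δ ω).1) = 0
      linear_combination (B δ ω).1 * hzero
    rw [hpre]
    simp


end
end

section
/- The set H(ℍ) of finite-energy horizontal curves is dense in W₀(ℍ): the closure of H(ℍ) in the ‖·‖_{W₀(ℍ)}-topology equals W₀(ℍ). -/
open MeasureTheory ProbabilityTheory Filter Topology Set
open scoped Classical

noncomputable section

namespace HCD

lemma ftc0 {f : ℝ → ℝ} (hf : Continuous f) (t : ℝ) :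
    HasDerivAt (fun u => ∫ s in (0:ℝ)..u, f s) (f t) t :=
  intervalIntegral.integral_hasDerivAt_right (hf.intervalIntegrable 0 t)
    (hf.stronglyMeasurableAtFilter _ _) hf.continuousAt

variable (p1 p2 q : Polynomial ℝ) (r : ℝ)

def pa (p : Polynomial ℝ) (t : ℝ) : ℝ := p.eval t - p.eval 0
def pd (p : Polynomial ℝ) (t : ℝ) : ℝ := p.derivative.eval t

lemma cont_pa (p : Polynomial ℝ) : Continuous (pa p) := p.continuous.sub continuous_const
lemma cont_pd (p : Polynomial ℝ) : Continuous (pd p) := p.derivative.continuous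
lemma hasDerivAt_pa (p : Polynomial ℝ) (t : ℝ) : HasDerivAt (pa p) (pd p t) t :=
  (p.hasDerivAt t).sub_const _
lemma pa_zero (p : Polynomial ℝ) : pa p 0 = 0 := sub_self _

def sAA (t : ℝ) : ℝ := pa p1 t * pd p2 t - pa p2 t * pd p1 t
lemma cont_sAA : Continuous (sAA p1 p2) :=
  ((cont_pa p1).mul (cont_pd p2)).sub ((cont_pa p2).mul (cont_pd p1))

def phi (t : ℝ) : ℝ := pa q t - (1/2) * ∫ s in (0:ℝ)..t, sAA p1 p2 s
lemma phi_zero : phi p1 p2 q 0 = 0 := by simp [phi, pa_zero]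
lemma hasDerivAt_phi (t : ℝ) :
    HasDerivAt (phi p1 p2 q) (pd q t - (1/2) * sAA p1 p2 t) t :=
  (hasDerivAt_pa q t).sub ((ftc0 (cont_sAA p1 p2) t).const_mul _)
lemma cont_phi : Continuous (phi p1 p2 q) :=
  continuous_iff_continuousAt.2 fun t => (hasDerivAt_phi p1 p2 q t).continuousAt

def th (t : ℝ) : ℝ := 2 * phi p1 p2 q t / r ^ 2
def thd (t : ℝ) : ℝ := 2 * (pd q t - (1/2) * sAA p1 p2 t) / r ^ 2
lemma th_zero : th p1 p2 q r 0 = 0 := by simp [th, phi_zero]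
lemma hasDerivAt_th (t : ℝ) : HasDerivAt (th p1 p2 q r) (thd p1 p2 q r t) t :=
  ((hasDerivAt_phi p1 p2 q t).const_mul 2).div_const _
lemma cont_th : Continuous (th p1 p2 q r) :=
  (continuous_const.mul (cont_phi p1 p2 q)).div_const _
lemma cont_thd : Continuous (thd p1 p2 q r) :=
  (continuous_const.mul ((cont_pd q).sub (continuous_const.mul (cont_sAA p1 p2)))).div_const _

def w1 (t : ℝ) : ℝ := r * Real.cos (th p1 p2 q r t) - r
def w2 (t : ℝ) : ℝ := r * Real.sin (th p1 p2 q r t)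
def w1d (t : ℝ) : ℝ := -(r * Real.sin (th p1 p2 q r t)) * thd p1 p2 q r t
def w2d (t : ℝ) : ℝ := (r * Real.cos (th p1 p2 q r t)) * thd p1 p2 q r t

lemma w1_zero : w1 p1 p2 q r 0 = 0 := by simp [w1, th_zero]
lemma w2_zero : w2 p1 p2 q r 0 = 0 := by simp [w2, th_zero]

lemma abs_w1_le (hr : 0 ≤ r) (t : ℝ) : |w1 p1 p2 q r t| ≤ 2 * r := by
  have h1 := Real.cos_le_one (th p1 p2 q r t)
  have h2 := Real.neg_one_le_cos (th p1 p2 q r t)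
  rw [abs_le]; unfold w1; constructor <;> nlinarith
lemma abs_w2_le (hr : 0 ≤ r) (t : ℝ) : |w2 p1 p2 q r t| ≤ 2 * r := by
  have h1 := Real.sin_le_one (th p1 p2 q r t)
  have h2 := Real.neg_one_le_sin (th p1 p2 q r t)
  rw [abs_le]; unfold w2; constructor <;> nlinarith

lemma hasDerivAt_w1 (t : ℝ) : HasDerivAt (w1 p1 p2 q r) (w1d p1 p2 q r t) t := by
  have h := (((Real.hasDerivAt_cos (th p1 p2 q r t)).comp t
    (hasDerivAt_th p1 p2 q r t)).const_mul r).sub_const r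
  refine h.congr_deriv ?_
  simp only [w1d]; ring
lemma hasDerivAt_w2 (t : ℝ) : HasDerivAt (w2 p1 p2 q r) (w2d p1 p2 q r t) t := by
  have h := ((Real.hasDerivAt_sin (th p1 p2 q r t)).comp t
    (hasDerivAt_th p1 p2 q r t)).const_mul r
  refine h.congr_deriv ?_
  simp only [w2d]; ring

lemma cont_w1 : Continuous (w1 p1 p2 q r) :=
  (continuous_const.mul (Real.continuous_cos.comp (cont_th p1 p2 q r))).sub continuous_const
lemma cont_w2 : Continuous (w2 p1 p2 q r) :=
  continuous_const.mul (Real.continuous_sin.comp (cont_th p1 p2 q r))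
lemma cont_w1d : Continuous (w1d p1 p2 q r) :=
  ((continuous_const.mul (Real.continuous_sin.comp (cont_th p1 p2 q r))).neg).mul
    (cont_thd p1 p2 q r)
lemma cont_w2d : Continuous (w2d p1 p2 q r) :=
  (continuous_const.mul (Real.continuous_cos.comp (cont_th p1 p2 q r))).mul
    (cont_thd p1 p2 q r)

def g1 (t : ℝ) : ℝ × ℝ := (pa p1 t + w1 p1 p2 q r t, pa p2 t + w2 p1 p2 q r t)
def cc (t : ℝ) : ℝ × ℝ := (pd p1 t + w1d p1 p2 q r t, pd p2 t + w2d p1 p2 q r t)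

lemma g1_zero : g1 p1 p2 q r 0 = 0 := by
  simp [g1, pa_zero, w1_zero, w2_zero]
lemma cont_g1 : Continuous (g1 p1 p2 q r) :=
  (((cont_pa p1).add (cont_w1 p1 p2 q r))).prodMk ((cont_pa p2).add (cont_w2 p1 p2 q r))
lemma cont_cc : Continuous (cc p1 p2 q r) :=
  (((cont_pd p1).add (cont_w1d p1 p2 q r))).prodMk ((cont_pd p2).add (cont_w2d p1 p2 q r))
lemma hasDerivAt_g1 (t : ℝ) : HasDerivAt (g1 p1 p2 q r) (cc p1 p2 q r t) t :=
  ((hasDerivAt_pa p1 t).add (hasDerivAt_w1 p1 p2 q r t)).prodMk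
    ((hasDerivAt_pa p2 t).add (hasDerivAt_w2 p1 p2 q r t))

lemma cont_sgc : Continuous (fun s => symp (g1 p1 p2 q r s) (cc p1 p2 q r s)) := by
  unfold symp
  exact (((cont_g1 p1 p2 q r).fst).mul ((cont_cc p1 p2 q r).snd)).sub
    (((cont_g1 p1 p2 q r).snd).mul ((cont_cc p1 p2 q r).fst))

def g2 (t : ℝ) : ℝ := (1/2) * ∫ s in (0:ℝ)..t, symp (g1 p1 p2 q r s) (cc p1 p2 q r s)

lemma hasDerivAt_g2 (t : ℝ) :
    HasDerivAt (g2 p1 p2 q r) ((1/2) * symp (g1 p1 p2 q r t) (cc p1 p2 q r t)) t :=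
  (ftc0 (cont_sgc p1 p2 q r) t).const_mul _
lemma cont_g2 : Continuous (g2 p1 p2 q r) :=
  continuous_iff_continuousAt.2 fun t => (hasDerivAt_g2 p1 p2 q r t).continuousAt
lemma g2_zero : g2 p1 p2 q r 0 = 0 := by simp [g2]

def hG (t : ℝ) : ℝ := pd p1 t * w2 p1 p2 q r t - pd p2 t * w1 p1 p2 q r t
lemma cont_hG : Continuous (hG p1 p2 q r) :=
  ((cont_pd p1).mul (cont_w2 p1 p2 q r)).sub ((cont_pd p2).mul (cont_w1 p1 p2 q r))

def G (t : ℝ) : ℝ := pa q t - (1/2) * r * w2 p1 p2 q r t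
  + (1/2) * (pa p1 t * w2 p1 p2 q r t - pa p2 t * w1 p1 p2 q r t)
  - ∫ s in (0:ℝ)..t, hG p1 p2 q r s

lemma G_zero : G p1 p2 q r 0 = 0 := by
  simp [G, pa_zero, w1_zero, w2_zero]

lemma hasDerivAt_G (hr : r ≠ 0) (t : ℝ) :
    HasDerivAt (G p1 p2 q r) ((1/2) * symp (g1 p1 p2 q r t) (cc p1 p2 q r t)) t := by
  have h : HasDerivAt (G p1 p2 q r)
      (pd q t - (1/2) * r * w2d p1 p2 q r t
        + (1/2) * (pd p1 t * w2 p1 p2 q r t + pa p1 t * w2d p1 p2 q r t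
          - (pd p2 t * w1 p1 p2 q r t + pa p2 t * w1d p1 p2 q r t))
        - hG p1 p2 q r t) t := by
    exact (((hasDerivAt_pa q t).sub ((hasDerivAt_w2 p1 p2 q r t).const_mul _)).add
      ((((hasDerivAt_pa p1 t).mul (hasDerivAt_w2 p1 p2 q r t)).sub
        ((hasDerivAt_pa p2 t).mul (hasDerivAt_w1 p1 p2 q r t))).const_mul _)).sub
      (ftc0 (cont_hG p1 p2 q r) t)
  convert h using 1
  have hsc : Real.sin (th p1 p2 q r t) ^ 2 + Real.cos (th p1 p2 q r t) ^ 2 = 1 :=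
    Real.sin_sq_add_cos_sq _
  simp only [symp, g1, cc, w1, w2, w1d, w2d, thd, hG, sAA]
  field_simp
  linear_combination (r*(2*pd q t - (pa p1 t * pd p2 t - pa p2 t * pd p1 t))) * hsc

lemma g2_eq_G (hr : r ≠ 0) (t : ℝ) : g2 p1 p2 q r t = G p1 p2 q r t := by
  have hd : ∀ s, HasDerivAt (fun u => g2 p1 p2 q r u - G p1 p2 q r u) 0 s := by
    intro s
    exact ((hasDerivAt_g2 p1 p2 q r s).sub (hasDerivAt_G p1 p2 q r hr s)).congr_deriv (sub_self _)
  have hc := is_const_of_deriv_eq_zero (fun u => ((hd u).differentiableAt))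
      (fun u => (hd u).deriv) t 0
  rw [g2_zero, G_zero] at hc
  linarith

def gam : W0H :=
  ⟨fun t => (g1 p1 p2 q r t, g2 p1 p2 q r t),
   ((cont_g1 p1 p2 q r).prodMk (cont_g2 p1 p2 q r)).continuousOn,
   by simp [g1_zero, g2_zero, hId]; rfl⟩

lemma gam_toFun (t : ℝ) : (gam p1 p2 q r).toFun t = (g1 p1 p2 q r t, g2 p1 p2 q r t) := rfl

lemma gam_mem : gam p1 p2 q r ∈ HH := by
  refine ⟨cc p1 p2 q r, (cont_cc p1 p2 q r).integrableOn_Icc, ?_, ?_, ?_⟩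
  · exact ((((cont_cc p1 p2 q r).fst).pow 2).add
      (((cont_cc p1 p2 q r).snd).pow 2)).integrableOn_Icc
  · intro t _
    have h := intervalIntegral.integral_eq_sub_of_hasDerivAt
      (f := g1 p1 p2 q r) (f' := cc p1 p2 q r)
      (fun s _ => hasDerivAt_g1 p1 p2 q r s)
      ((cont_cc p1 p2 q r).intervalIntegrable 0 t)
    rw [gam_toFun, h, g1_zero, sub_zero]
  · intro t _
    rfl

end HCD


lemma HCDnum1 (δ r β M0 : ℝ) (hM0 : 0 ≤ M0) (hδ : 0 < δ) (hr : 0 < r)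
    (hrδ : r ≤ δ) (hδ2 : δ * (32 * (M0 + 3)) ≤ β) : 2 * δ + 2 * r ≤ β := by
  nlinarith [mul_nonneg hδ.le hM0]

lemma HCDnum2 (δ r β M0 B : ℝ) (hM0 : 0 ≤ M0) (hB : 0 ≤ B) (hδ : 0 < δ) (hr : 0 < r)
    (hδ1 : δ ≤ 1) (hrδ : r ≤ δ) (hδ2 : δ * (32 * (M0 + 3)) ≤ β)
    (hr2 : r * (32 * (M0 + B + 4)) ≤ β) :
    2 * δ + r * r + (M0 + 2) * (2 * r) + 4 * B * r + (M0 + 4) * (2 * δ + 2 * r) ≤ β := by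
  have hr1 : r ≤ 1 := le_trans hrδ hδ1
  have hrr : r * r ≤ r := by nlinarith
  nlinarith [mul_nonneg hδ.le hM0, mul_nonneg hr.le hM0, mul_nonneg hr.le hB]

lemma HCDnum3 (β ε : ℝ) (hε : 0 < ε) (hβ : 0 < β) (hβ1 : β ≤ 1) (hβ2 : β ≤ ε ^ 2 / 9) :
    4 * β ^ 4 + β ^ 2 ≤ (ε / 2) ^ 4 := by
  have h1 : β ^ 2 ≤ (ε ^ 2 / 9) ^ 2 := by nlinarith
  have h0 : β ^ 2 ≤ 1 := by nlinarith
  have h2 : β ^ 4 ≤ β ^ 2 := by nlinarith [mul_nonneg (sub_nonneg.2 h0) (sq_nonneg β)]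
  have h3 : (0:ℝ) ≤ ε ^ 4 := by positivity
  nlinarith [h1, h2, h3]

set_option maxHeartbeats 1000000 in
/-- (Proposition `p.closure`): the set `H(ℍ)` of finite-energy horizontal curves is dense
in `W₀(ℍ)`: its closure in the `‖·‖_{W₀(ℍ)}`-topology is all of `W₀(ℍ)`. -/
theorem horizontal_curves_dense : wClosure HH = Set.univ := by
  refine Set.eq_univ_of_forall fun x => ?_
  intro ε hε
  set β : ℝ := min 1 (ε ^ 2 / 9) with hβdef
  have hβpos : 0 < β := lt_min one_pos (by positivity)
  have hβ1 : β ≤ 1 := min_le_left _ _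
  have hβ2 : β ≤ ε ^ 2 / 9 := min_le_right _ _
  -- continuity of components of the target path
  have hcX1 : ContinuousOn (fun t => (x.toFun t).1.1) (Icc (0:ℝ) 1) := x.cont.fst.fst
  have hcX2 : ContinuousOn (fun t => (x.toFun t).1.2) (Icc (0:ℝ) 1) := x.cont.fst.snd
  have hcZ : ContinuousOn (fun t => (x.toFun t).2) (Icc (0:ℝ) 1) := x.cont.snd
  have hX10 : (x.toFun 0).1.1 = 0 := by rw [x.init]; rfl
  have hX20 : (x.toFun 0).1.2 = 0 := by rw [x.init]; rfl
  have hZ0 : (x.toFun 0).2 = 0 := by rw [x.init]; rfl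
  have h0I : (0:ℝ) ∈ Icc (0:ℝ) 1 := by norm_num
  -- a bound on the target path
  obtain ⟨C1, hC1⟩ := isCompact_Icc.exists_bound_of_continuousOn hcX1
  obtain ⟨C2, hC2⟩ := isCompact_Icc.exists_bound_of_continuousOn hcX2
  set M0 : ℝ := max (max C1 C2) 0 with hM0def
  have hM0 : 0 ≤ M0 := le_max_right _ _
  have hM1 : ∀ t ∈ Icc (0:ℝ) 1, |(x.toFun t).1.1| ≤ M0 := fun t ht =>
    le_trans (by simpa [Real.norm_eq_abs] using hC1 t ht)
      (le_trans (le_max_left _ _) (le_max_left _ _))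
  have hM2 : ∀ t ∈ Icc (0:ℝ) 1, |(x.toFun t).1.2| ≤ M0 := fun t ht =>
    le_trans (by simpa [Real.norm_eq_abs] using hC2 t ht)
      (le_trans (le_max_right _ _) (le_max_left _ _))
  -- δ
  set δ : ℝ := min 1 (β / (32 * (M0 + 3))) with hδdef
  have hδpos : 0 < δ := lt_min one_pos (by positivity)
  have hδ1 : δ ≤ 1 := min_le_left _ _
  have hδ2 : δ * (32 * (M0 + 3)) ≤ β := by
    have h := min_le_right 1 (β / (32 * (M0 + 3)))
    calc δ * (32 * (M0 + 3)) ≤ (β / (32 * (M0 + 3))) * (32 * (M0 + 3)) :=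
          mul_le_mul_of_nonneg_right h (by positivity)
      _ = β := by field_simp
  -- polynomial approximations
  obtain ⟨P1, hP1⟩ := exists_polynomial_near_of_continuousOn 0 1 _ hcX1 δ hδpos
  obtain ⟨P2, hP2⟩ := exists_polynomial_near_of_continuousOn 0 1 _ hcX2 δ hδpos
  obtain ⟨Q, hQ⟩ := exists_polynomial_near_of_continuousOn 0 1 _ hcZ δ hδpos
  have ha1 : ∀ t ∈ Icc (0:ℝ) 1, |HCD.pa P1 t - (x.toFun t).1.1| ≤ 2 * δ := by
    intro t ht
    have h1 := abs_lt.1 (hP1 t ht)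
    have h2 := abs_lt.1 (hP1 0 h0I)
    rw [hX10] at h2
    unfold HCD.pa
    rw [abs_le]; constructor <;> [linarith [h1.1, h1.2, h2.1, h2.2];
      linarith [h1.1, h1.2, h2.1, h2.2]]
  have ha2 : ∀ t ∈ Icc (0:ℝ) 1, |HCD.pa P2 t - (x.toFun t).1.2| ≤ 2 * δ := by
    intro t ht
    have h1 := abs_lt.1 (hP2 t ht)
    have h2 := abs_lt.1 (hP2 0 h0I)
    rw [hX20] at h2
    unfold HCD.pa
    rw [abs_le]; constructor <;> [linarith [h1.1, h1.2, h2.1, h2.2];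
      linarith [h1.1, h1.2, h2.1, h2.2]]
  have haq : ∀ t ∈ Icc (0:ℝ) 1, |HCD.pa Q t - (x.toFun t).2| ≤ 2 * δ := by
    intro t ht
    have h1 := abs_lt.1 (hQ t ht)
    have h2 := abs_lt.1 (hQ 0 h0I)
    rw [hZ0] at h2
    unfold HCD.pa
    rw [abs_le]; constructor <;> [linarith [h1.1, h1.2, h2.1, h2.2];
      linarith [h1.1, h1.2, h2.1, h2.2]]
  have hpa1 : ∀ t ∈ Icc (0:ℝ) 1, |HCD.pa P1 t| ≤ M0 + 2 := by
    intro t ht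
    have h1 := abs_le.1 (ha1 t ht)
    have h2 := abs_le.1 (hM1 t ht)
    rw [abs_le]; constructor <;> [linarith; linarith]
  have hpa2 : ∀ t ∈ Icc (0:ℝ) 1, |HCD.pa P2 t| ≤ M0 + 2 := by
    intro t ht
    have h1 := abs_le.1 (ha2 t ht)
    have h2 := abs_le.1 (hM2 t ht)
    rw [abs_le]; constructor <;> [linarith; linarith]
  -- a bound on the polynomial derivatives
  obtain ⟨D1, hD1⟩ := isCompact_Icc.exists_bound_of_continuousOn (HCD.cont_pd P1).continuousOn
  obtain ⟨D2, hD2⟩ := isCompact_Icc.exists_bound_of_continuousOn (HCD.cont_pd P2).continuousOn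
  set B : ℝ := max (max D1 D2) 0 with hBdef
  have hB0 : 0 ≤ B := le_max_right _ _
  have hB1 : ∀ t ∈ Icc (0:ℝ) 1, |HCD.pd P1 t| ≤ B := fun t ht =>
    le_trans (by simpa [Real.norm_eq_abs] using hD1 t ht)
      (le_trans (le_max_left _ _) (le_max_left _ _))
  have hB2 : ∀ t ∈ Icc (0:ℝ) 1, |HCD.pd P2 t| ≤ B := fun t ht =>
    le_trans (by simpa [Real.norm_eq_abs] using hD2 t ht)
      (le_trans (le_max_right _ _) (le_max_left _ _))
  -- r
  set r : ℝ := min δ (β / (32 * (M0 + B + 4))) with hrdef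
  have hrpos : 0 < r := lt_min hδpos (by positivity)
  have hrδ : r ≤ δ := min_le_left _ _
  have hr2 : r * (32 * (M0 + B + 4)) ≤ β := by
    have h := min_le_right δ (β / (32 * (M0 + B + 4)))
    calc r * (32 * (M0 + B + 4)) ≤ (β / (32 * (M0 + B + 4))) * (32 * (M0 + B + 4)) :=
          mul_le_mul_of_nonneg_right h (by positivity)
      _ = β := by field_simp
  have hrne : r ≠ 0 := ne_of_gt hrpos
  have hr1 : r ≤ 1 := hrδ.trans hδ1
  have hδβ : 2 * δ + 2 * r ≤ β := HCDnum1 δ r β M0 hM0 hδpos hrpos hrδ hδ2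
  have htot : 2 * δ + r * r + (M0 + 2) * (2 * r) + 4 * B * r
      + (M0 + 4) * (2 * δ + 2 * r) ≤ β :=
    HCDnum2 δ r β M0 B hM0 hB0 hδpos hrpos hδ1 hrδ hδ2 hr2
  have hbe : 4 * β ^ 4 + β ^ 2 ≤ (ε / 2) ^ 4 := HCDnum3 β ε hε hβpos hβ1 hβ2
  refine ⟨HCD.gam P1 P2 Q r, HCD.gam_mem P1 P2 Q r, ?_⟩
  have key : ∀ t ∈ Icc (0:ℝ) 1,
      hnorm (hmul (hinv ((HCD.gam P1 P2 Q r).toFun t)) (x.toFun t)) ≤ ε / 2 := by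
    intro t ht
    obtain ⟨ht0, ht1⟩ := ht
    set X1v : ℝ := (x.toFun t).1.1 with hX1v
    set X2v : ℝ := (x.toFun t).1.2 with hX2v
    set Zv : ℝ := (x.toFun t).2 with hZv
    set a1 : ℝ := HCD.pa P1 t with ha1v
    set a2 : ℝ := HCD.pa P2 t with ha2v
    set aq : ℝ := HCD.pa Q t with haqv
    set u1 : ℝ := HCD.w1 P1 P2 Q r t with hu1v
    set u2 : ℝ := HCD.w2 P1 P2 Q r t with hu2v
    set I : ℝ := ∫ s in (0:ℝ)..t, HCD.hG P1 P2 Q r s with hIv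
    have hm : hmul (hinv ((HCD.gam P1 P2 Q r).toFun t)) (x.toFun t)
        = ((X1v - (a1 + u1), X2v - (a2 + u2)),
           Zv - HCD.G P1 P2 Q r t
             - (1 / 2) * ((a1 + u1) * X2v - (a2 + u2) * X1v)) := by
      rw [HCD.gam_toFun, HCD.g2_eq_G P1 P2 Q r hrne]
      refine Prod.ext (Prod.ext ?_ ?_) ?_ <;>
        simp [hmul, hinv, symp, HCD.g1, ha1v, ha2v, hu1v, hu2v, hX1v, hX2v, hZv] <;> ring
    rw [hm]
    -- component bounds
    have hwu1 := abs_le.1 (HCD.abs_w1_le P1 P2 Q r hrpos.le t)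
    have hwu2 := abs_le.1 (HCD.abs_w2_le P1 P2 Q r hrpos.le t)
    have hd1 : |X1v - (a1 + u1)| ≤ 2 * δ + 2 * r := by
      have h1 := abs_le.1 (ha1 t ⟨ht0, ht1⟩)
      rw [abs_le]; constructor <;> [linarith [h1.1, h1.2, hwu1.1, hwu1.2];
        linarith [h1.1, h1.2, hwu1.1, hwu1.2]]
    have hd2 : |X2v - (a2 + u2)| ≤ 2 * δ + 2 * r := by
      have h1 := abs_le.1 (ha2 t ⟨ht0, ht1⟩)
      rw [abs_le]; constructor <;> [linarith [h1.1, h1.2, hwu2.1, hwu2.2];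
        linarith [h1.1, h1.2, hwu2.1, hwu2.2]]
    have hv1 : |X1v - (a1 + u1)| ≤ β := hd1.trans hδβ
    have hv2 : |X2v - (a2 + u2)| ≤ β := hd2.trans hδβ
    -- bound on the integral of hG
    have hI : |I| ≤ 4 * B * r := by
      have hb : ∀ u ∈ Set.uIoc (0:ℝ) t, ‖HCD.hG P1 P2 Q r u‖ ≤ 4 * B * r := by
        intro u hu
        rw [Set.uIoc_of_le ht0] at hu
        have huI : u ∈ Icc (0:ℝ) 1 := ⟨hu.1.le, hu.2.trans ht1⟩
        rw [Real.norm_eq_abs]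
        unfold HCD.hG
        have e1 := hB1 u huI
        have e2 := hB2 u huI
        have e3 := HCD.abs_w1_le P1 P2 Q r hrpos.le u
        have e4 := HCD.abs_w2_le P1 P2 Q r hrpos.le u
        calc |HCD.pd P1 u * HCD.w2 P1 P2 Q r u - HCD.pd P2 u * HCD.w1 P1 P2 Q r u|
            ≤ |HCD.pd P1 u * HCD.w2 P1 P2 Q r u| + |HCD.pd P2 u * HCD.w1 P1 P2 Q r u| :=
              abs_sub _ _
          _ = |HCD.pd P1 u| * |HCD.w2 P1 P2 Q r u| + |HCD.pd P2 u| * |HCD.w1 P1 P2 Q r u| := by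
              rw [abs_mul, abs_mul]
          _ ≤ B * (2 * r) + B * (2 * r) := add_le_add
              (mul_le_mul e1 e4 (abs_nonneg _) hB0) (mul_le_mul e2 e3 (abs_nonneg _) hB0)
          _ = 4 * B * r := by ring
      have h := intervalIntegral.norm_integral_le_of_norm_le_const hb
      rw [Real.norm_eq_abs] at h
      calc |I| ≤ 4 * B * r * |t - 0| := h
        _ ≤ 4 * B * r * 1 := by
            apply mul_le_mul_of_nonneg_left _ (by positivity)
            rw [sub_zero, abs_of_nonneg ht0]; exact ht1
        _ = 4 * B * r := by ring
    -- bound on the symplectic correction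
    have hga1 : |a1 + u1| ≤ M0 + 4 := by
      have h1 := abs_le.1 (hpa1 t ⟨ht0, ht1⟩)
      rw [abs_le]; constructor <;> [linarith [hwu1.1, hwu1.2, hr1];
        linarith [hwu1.1, hwu1.2, hr1]]
    have hga2 : |a2 + u2| ≤ M0 + 4 := by
      have h1 := abs_le.1 (hpa2 t ⟨ht0, ht1⟩)
      rw [abs_le]; constructor <;> [linarith [hwu2.1, hwu2.2, hr1];
        linarith [hwu2.1, hwu2.2, hr1]]
    have hsymp : |(a1 + u1) * X2v - (a2 + u2) * X1v| ≤ 2 * (M0 + 4) * (2 * δ + 2 * r) := by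
      have hr1' : (a1 + u1) * X2v - (a2 + u2) * X1v
          = (a1 + u1) * (X2v - (a2 + u2)) - (a2 + u2) * (X1v - (a1 + u1)) := by ring
      rw [hr1']
      calc |(a1 + u1) * (X2v - (a2 + u2)) - (a2 + u2) * (X1v - (a1 + u1))|
          ≤ |(a1 + u1) * (X2v - (a2 + u2))| + |(a2 + u2) * (X1v - (a1 + u1))| := abs_sub _ _
        _ = |a1 + u1| * |X2v - (a2 + u2)| + |a2 + u2| * |X1v - (a1 + u1)| := by
            rw [abs_mul, abs_mul]
        _ ≤ (M0 + 4) * (2 * δ + 2 * r) + (M0 + 4) * (2 * δ + 2 * r) := add_le_add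
            (mul_le_mul hga1 hd2 (abs_nonneg _) (by linarith))
            (mul_le_mul hga2 hd1 (abs_nonneg _) (by linarith))
        _ = 2 * (M0 + 4) * (2 * δ + 2 * r) := by ring
    -- bound on the vertical component
    have hSeq : Zv - HCD.G P1 P2 Q r t - (1 / 2) * ((a1 + u1) * X2v - (a2 + u2) * X1v)
        = (Zv - aq) + (1 / 2 * r * u2) + (-(1 / 2) * (a1 * u2 - a2 * u1)) + I
          + (-(1 / 2) * ((a1 + u1) * X2v - (a2 + u2) * X1v)) := by
      simp only [HCD.G, ← ha1v, ← ha2v, ← haqv, ← hu1v, ← hu2v, ← hIv]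
      ring
    have habs5 : ∀ a b c d e : ℝ, |a + b + c + d + e| ≤ |a| + |b| + |c| + |d| + |e| := by
      intro a b c d e
      calc |a + b + c + d + e| ≤ |a + b + c + d| + |e| := abs_add_le _ _
        _ ≤ (|a + b + c| + |d|) + |e| := add_le_add_left (abs_add_le _ _) _
        _ ≤ ((|a + b| + |c|) + |d|) + |e| := by
            have := abs_add_le (a + b) c; linarith
        _ ≤ (((|a| + |b|) + |c|) + |d|) + |e| := by
            have := abs_add_le a b; linarith
        _ = |a| + |b| + |c| + |d| + |e| := by ring
    have hq0 := abs_le.1 (haq t ⟨ht0, ht1⟩)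
    have hmid : |(-(1 / 2)) * (a1 * u2 - a2 * u1)| ≤ (M0 + 2) * (2 * r) := by
      have h1 := hpa1 t ⟨ht0, ht1⟩
      have h2 := hpa2 t ⟨ht0, ht1⟩
      have e3 := HCD.abs_w1_le P1 P2 Q r hrpos.le t
      have e4 := HCD.abs_w2_le P1 P2 Q r hrpos.le t
      rw [abs_mul]
      calc |(-(1/2) : ℝ)| * |a1 * u2 - a2 * u1| = (1/2) * |a1 * u2 - a2 * u1| := by norm_num
        _ ≤ (1/2) * (|a1 * u2| + |a2 * u1|) := by
            have := abs_sub (a1 * u2) (a2 * u1); linarith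
        _ = (1/2) * (|a1| * |u2| + |a2| * |u1|) := by rw [abs_mul, abs_mul]
        _ ≤ (1/2) * ((M0 + 2) * (2 * r) + (M0 + 2) * (2 * r)) := by
            have b1 := mul_le_mul h1 e4 (abs_nonneg _) (by linarith)
            have b2 := mul_le_mul h2 e3 (abs_nonneg _) (by linarith)
            linarith
        _ = (M0 + 2) * (2 * r) := by ring
    have hru2 : |1 / 2 * r * u2| ≤ r * r := by
      rw [abs_mul, abs_mul]
      have : |(1/2 : ℝ)| = 1/2 := by norm_num
      rw [this, abs_of_pos hrpos]
      have h := mul_le_mul_of_nonneg_left (HCD.abs_w2_le P1 P2 Q r hrpos.le t) hrpos.le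
      calc 1 / 2 * r * |u2| ≤ 1 / 2 * (r * (2 * r)) := by
            rw [mul_assoc]; linarith [h]
        _ = r * r := by ring
    have hlast : |(-(1 / 2)) * ((a1 + u1) * X2v - (a2 + u2) * X1v)|
        ≤ (M0 + 4) * (2 * δ + 2 * r) := by
      rw [abs_mul]
      have : |(-(1/2) : ℝ)| = 1/2 := by norm_num
      rw [this]
      linarith [hsymp]
    have hs : |Zv - HCD.G P1 P2 Q r t - (1 / 2) * ((a1 + u1) * X2v - (a2 + u2) * X1v)| ≤ β := by
      rw [hSeq]
      have h5 := habs5 (Zv - aq) (1 / 2 * r * u2) (-(1 / 2) * (a1 * u2 - a2 * u1)) I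
        (-(1 / 2) * ((a1 + u1) * X2v - (a2 + u2) * X1v))
      have hqb : |Zv - aq| ≤ 2 * δ := by
        rw [abs_sub_comm]; rw [abs_le]; constructor <;> [linarith [hq0.1, hq0.2];
          linarith [hq0.1, hq0.2]]
      linarith [h5, hqb, hru2, hmid, hI, hlast, htot]
    -- put it together
    have hv1' := abs_le.1 hv1
    have hv2' := abs_le.1 hv2
    have hs' := abs_le.1 hs
    have hb4 : ((X1v - (a1 + u1)) ^ 2 + (X2v - (a2 + u2)) ^ 2) ^ 2
        + (Zv - HCD.G P1 P2 Q r t - (1 / 2) * ((a1 + u1) * X2v - (a2 + u2) * X1v)) ^ 2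
        ≤ (ε / 2) ^ 4 := by
      have e1 : (X1v - (a1 + u1)) ^ 2 ≤ β ^ 2 := sq_le_sq' hv1'.1 hv1'.2
      have e2 : (X2v - (a2 + u2)) ^ 2 ≤ β ^ 2 := sq_le_sq' hv2'.1 hv2'.2
      have e3 : (Zv - HCD.G P1 P2 Q r t
          - (1 / 2) * ((a1 + u1) * X2v - (a2 + u2) * X1v)) ^ 2 ≤ β ^ 2 :=
        sq_le_sq' hs'.1 hs'.2
      have esum : (X1v - (a1 + u1)) ^ 2 + (X2v - (a2 + u2)) ^ 2 ≤ 2 * β ^ 2 := by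
        linarith [e1, e2]
      have h0 : 0 ≤ (X1v - (a1 + u1)) ^ 2 + (X2v - (a2 + u2)) ^ 2 := by positivity
      have esq : ((X1v - (a1 + u1)) ^ 2 + (X2v - (a2 + u2)) ^ 2) ^ 2 ≤ (2 * β ^ 2) ^ 2 :=
        pow_le_pow_left₀ h0 esum 2
      have hexp : (2 * β ^ 2) ^ 2 = 4 * β ^ 4 := by ring
      linarith [esq, e3, hbe, hexp.le, hexp.ge]
    show hnorm _ ≤ ε / 2
    unfold hnorm
    simp only
    calc (((X1v - (a1 + u1)) ^ 2 + (X2v - (a2 + u2)) ^ 2) ^ 2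
          + (Zv - HCD.G P1 P2 Q r t
            - (1 / 2) * ((a1 + u1) * X2v - (a2 + u2) * X1v)) ^ 2) ^ ((1:ℝ) / 4)
        ≤ ((ε / 2) ^ 4) ^ ((1:ℝ) / 4) := Real.rpow_le_rpow (by positivity) hb4 (by norm_num)
      _ = ε / 2 := by
          rw [← Real.rpow_natCast (ε / 2) 4, ← Real.rpow_mul (by positivity)]
          norm_num
  haveI : Nonempty (Icc (0:ℝ) 1) := ⟨⟨0, h0I⟩⟩
  have hle : dW (HCD.gam P1 P2 Q r) x ≤ ε / 2 := ciSup_le fun t => key t t.2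
  linarith


end
end

section
/- Let ξ(t) = (0,0,t) ∈ ℍ for t ∈ [0,1], and for n ∈ ℕ let φ_n(s) = ((2/n)cos(n²s), (1/n)sin(n²s), s). Then each φ_n is a horizontal curve of finite energy (i.e., its third component satisfies φ_{n,3}′(s) = (1/2)ω(𝛗_n(s),𝛗_n′(s)) with ∫₀¹‖𝛗_n′(s)‖²ds < ∞), and max_{0≤t≤1}|φ_n(t)⁻¹ξ(t)| → 0 as n → ∞. -/
open MeasureTheory Filter Topology Set

noncomputable section

/-- The vertical curve `ξ(t) = (0,0,t)`. -/
def xi (t : ℝ) : He := ((0, 0), t)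

/-- The helices `φ_n(s) = ((2/n)cos(n²s), (1/n)sin(n²s), s)`. -/
def helix (n : ℕ) (s : ℝ) : He :=
  ((2 / (n : ℝ) * Real.cos ((n : ℝ) ^ 2 * s), 1 / (n : ℝ) * Real.sin ((n : ℝ) ^ 2 * s)), s)

lemma helix_fst_hasDerivAt (n : ℕ) (s : ℝ) :
    HasDerivAt (fun u => (helix n u).1)
      (2 / (n : ℝ) * (-Real.sin ((n : ℝ) ^ 2 * s) * (n : ℝ) ^ 2),
       1 / (n : ℝ) * (Real.cos ((n : ℝ) ^ 2 * s) * (n : ℝ) ^ 2)) s := by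
  have hlin : HasDerivAt (fun u : ℝ => (n : ℝ) ^ 2 * u) ((n : ℝ) ^ 2) s := by
    simpa using (hasDerivAt_id s).const_mul ((n : ℝ) ^ 2)
  have h1 : HasDerivAt (fun u => 2 / (n : ℝ) * Real.cos ((n : ℝ) ^ 2 * u))
      (2 / (n : ℝ) * (-Real.sin ((n : ℝ) ^ 2 * s) * (n : ℝ) ^ 2)) s :=
    (((Real.hasDerivAt_cos _).comp s hlin)).const_mul _
  have h2 : HasDerivAt (fun u => 1 / (n : ℝ) * Real.sin ((n : ℝ) ^ 2 * u))
      (1 / (n : ℝ) * (Real.cos ((n : ℝ) ^ 2 * s) * (n : ℝ) ^ 2)) s :=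
    (((Real.hasDerivAt_sin _).comp s hlin)).const_mul _
  simpa [helix] using h1.prodMk h2

/-- Each helix `φ_n` (for `n ≥ 1`) is a horizontal curve of finite energy (the derivative of
its third component equals `(1/2)ω(𝛗_n, 𝛗_n')` everywhere and `∫₀¹‖𝛗_n'‖² < ∞`), and
`max_{0≤t≤1} |φ_n(t)⁻¹ ξ(t)| → 0` as `n → ∞`. -/
theorem helices_shrink_to_vertical_line :
    (∀ n : ℕ, 1 ≤ n → ∀ s : ℝ, ∃ d : ℝ × ℝ,
      HasDerivAt (fun u => (helix n u).1) d s ∧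
      HasDerivAt (fun u => (helix n u).2) ((1 / 2) * symp (helix n s).1 d) s) ∧
    (∀ n : ℕ, 1 ≤ n →
      IntegrableOn
        (fun s => (deriv (fun u => (helix n u).1) s).1 ^ 2 +
                  (deriv (fun u => (helix n u).1) s).2 ^ 2)
        (Icc (0 : ℝ) 1)) ∧
    Tendsto (fun n : ℕ => ⨆ t : Icc (0 : ℝ) 1, hnorm (hmul (hinv (helix n t)) (xi t)))
      atTop (𝓝 0) := by
  refine ⟨?_, ?_, ?_⟩
  · intro n hn s
    have hn0 : (n : ℝ) ≠ 0 := Nat.cast_ne_zero.mpr (by omega)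
    refine ⟨_, helix_fst_hasDerivAt n s, ?_⟩
    have hval : (1 / 2) * symp (helix n s).1
        (2 / (n : ℝ) * (-Real.sin ((n : ℝ) ^ 2 * s) * (n : ℝ) ^ 2),
         1 / (n : ℝ) * (Real.cos ((n : ℝ) ^ 2 * s) * (n : ℝ) ^ 2)) = 1 := by
      have hpy := Real.sin_sq_add_cos_sq ((n : ℝ) ^ 2 * s)
      simp only [symp, helix]
      field_simp
      nlinarith [hpy]
    rw [hval]
    exact hasDerivAt_id' s
  · intro n hn
    have heq : (fun s => (deriv (fun u => (helix n u).1) s).1 ^ 2 +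
                  (deriv (fun u => (helix n u).1) s).2 ^ 2)
        = fun s => (2 / (n : ℝ) * (-Real.sin ((n : ℝ) ^ 2 * s) * (n : ℝ) ^ 2)) ^ 2 +
            (1 / (n : ℝ) * (Real.cos ((n : ℝ) ^ 2 * s) * (n : ℝ) ^ 2)) ^ 2 := by
      funext s
      rw [(helix_fst_hasDerivAt n s).deriv]
    rw [heq]
    exact (Continuous.integrableOn_Icc (by continuity))
  · have hb : ∀ n : ℕ, ∀ t : Icc (0 : ℝ) 1,
        hnorm (hmul (hinv (helix n t)) (xi t)) ≤ 2 / (n : ℝ) := by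
      intro n t
      have hn0 : (0 : ℝ) ≤ 2 / (n : ℝ) := by positivity
      have key : hmul (hinv (helix n t)) (xi t)
          = ((-(2 / (n : ℝ) * Real.cos ((n : ℝ) ^ 2 * t)),
              -(1 / (n : ℝ) * Real.sin ((n : ℝ) ^ 2 * t))), 0) := by
        simp [hmul, hinv, helix, xi, symp]
      rw [key]
      unfold hnorm
      simp only
      have hbase : ((-(2 / (n : ℝ) * Real.cos ((n : ℝ) ^ 2 * ↑t))) ^ 2 +
          (-(1 / (n : ℝ) * Real.sin ((n : ℝ) ^ 2 * ↑t))) ^ 2) ^ 2 + (0:ℝ) ^ 2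
          ≤ (2 / (n : ℝ)) ^ 4 := by
        have hc : (Real.cos ((n : ℝ) ^ 2 * ↑t)) ^ 2 ≤ 1 := Real.cos_sq_le_one _
        have hs : (Real.sin ((n : ℝ) ^ 2 * ↑t)) ^ 2 ≤ 1 := Real.sin_sq_le_one _
        have h1 : (-(2 / (n : ℝ) * Real.cos ((n : ℝ) ^ 2 * ↑t))) ^ 2 +
            (-(1 / (n : ℝ) * Real.sin ((n : ℝ) ^ 2 * ↑t))) ^ 2 ≤ (2 / (n : ℝ)) ^ 2 := by
          rcases eq_or_ne (n : ℝ) 0 with h | h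
          · simp [h]
          · have hpos : (0:ℝ) < (n:ℝ)^2 := by positivity
            have e1 : (-(2 / (n : ℝ) * Real.cos ((n : ℝ) ^ 2 * ↑t))) ^ 2
                = 4 * (Real.cos ((n : ℝ) ^ 2 * ↑t)) ^ 2 / (n:ℝ)^2 := by field_simp; ring
            have e2 : (-(1 / (n : ℝ) * Real.sin ((n : ℝ) ^ 2 * ↑t))) ^ 2
                = (Real.sin ((n : ℝ) ^ 2 * ↑t)) ^ 2 / (n:ℝ)^2 := by field_simp
            have e3 : (2 / (n : ℝ)) ^ 2 = 4 / (n:ℝ)^2 := by field_simp; ring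
            rw [e1, e2, e3, ← add_div, div_le_div_iff₀ hpos hpos]
            have hpy := Real.sin_sq_add_cos_sq ((n : ℝ) ^ 2 * ↑t)
            have h4 : 4 * (Real.cos ((n : ℝ) ^ 2 * ↑t)) ^ 2 +
                (Real.sin ((n : ℝ) ^ 2 * ↑t)) ^ 2 ≤ 4 := by nlinarith [hpy, hc]
            nlinarith [mul_le_mul_of_nonneg_right h4 hpos.le]
        have hnn : (0:ℝ) ≤ (-(2 / (n : ℝ) * Real.cos ((n : ℝ) ^ 2 * ↑t))) ^ 2 +
            (-(1 / (n : ℝ) * Real.sin ((n : ℝ) ^ 2 * ↑t))) ^ 2 := by positivity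
        have h2 := pow_le_pow_left₀ hnn h1 2
        calc ((-(2 / (n : ℝ) * Real.cos ((n : ℝ) ^ 2 * ↑t))) ^ 2 +
              (-(1 / (n : ℝ) * Real.sin ((n : ℝ) ^ 2 * ↑t))) ^ 2) ^ 2 + (0:ℝ) ^ 2
            = ((-(2 / (n : ℝ) * Real.cos ((n : ℝ) ^ 2 * ↑t))) ^ 2 +
              (-(1 / (n : ℝ) * Real.sin ((n : ℝ) ^ 2 * ↑t))) ^ 2) ^ 2 := by ring
          _ ≤ ((2 / (n : ℝ)) ^ 2) ^ 2 := h2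
          _ = (2 / (n : ℝ)) ^ 4 := by ring
      calc (((-(2 / (n : ℝ) * Real.cos ((n : ℝ) ^ 2 * ↑t))) ^ 2 +
          (-(1 / (n : ℝ) * Real.sin ((n : ℝ) ^ 2 * ↑t))) ^ 2) ^ 2 + (0:ℝ) ^ 2) ^ ((1:ℝ)/4)
            ≤ ((2 / (n : ℝ)) ^ 4) ^ ((1:ℝ)/4) := by
              apply Real.rpow_le_rpow (by positivity) hbase (by norm_num)
        _ = 2 / (n : ℝ) := by
              rw [← Real.rpow_natCast (2 / (n:ℝ)) 4, ← Real.rpow_mul hn0]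
              norm_num
    have hnn : ∀ n : ℕ, 0 ≤ ⨆ t : Icc (0 : ℝ) 1, hnorm (hmul (hinv (helix n t)) (xi t)) := by
      intro n
      apply Real.iSup_nonneg
      intro t
      exact Real.rpow_nonneg (by positivity) _
    have hle : ∀ n : ℕ, (⨆ t : Icc (0 : ℝ) 1, hnorm (hmul (hinv (helix n t)) (xi t))) ≤ 2 / (n : ℝ) :=
      fun n => Real.iSup_le (hb n) (by positivity)
    have h2n : Tendsto (fun n : ℕ => 2 / (n : ℝ)) atTop (𝓝 0) := by
      simpa using tendsto_const_nhds.div_atTop (tendsto_natCast_atTop_atTop (R := ℝ))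
    exact squeeze_zero hnn hle h2n


end
end
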